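/- For λ ∈ ℂⁿ with pairwise distinct entries, the row vector of Vandermonde basis functions v_λ(t) = (v_{0,λ}(t), …, v_{n-1,λ}(t)) satisfies the transposed companion ODE d/dt v_λ(t) = v_λ(t) C_λ, where C_λ is the companion matrix with subdiagonal of 1's above and last row (-a_{0,λ}, …, -a_{n-1,λ}); equivalently, componentwise, v'_{k,λ}(t) = v_{k-1,λ}(t) - a_{k,λ} v_{n-1,λ}(t) with v_{-1,λ} := 0. -/

import Mathlib

open Finset

noncomputable def acoef {R : Type*} [CommRing R] {n : ℕ} (lam : Fin n → R) (k : ℤ) : R :=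
  if 0 ≤ k ∧ k ≤ (n : ℤ) then
    (-1 : R) ^ (n - k.toNat) *
      ∑ I ∈ Finset.univ.powersetCard (n - k.toNat), ∏ i ∈ I, lam i
  else 0

def removeEntry {α : Type*} {n : ℕ} (lam : Fin n → α) (i : Fin n) : Fin (n - 1) → α :=
  fun j => lam (Fin.cast (Nat.succ_pred_eq_of_pos i.pos)
    ((Fin.cast (Nat.succ_pred_eq_of_pos i.pos).symm i).succAbove j))


noncomputable def vbasisC {n : ℕ} (lam : Fin n → ℂ) (k : ℤ) (t : ℝ) : ℂ :=
  (-1 : ℂ) ^ (n - 1) *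
    ∑ i : Fin n, acoef (removeEntry lam i) k /
      (∏ j ∈ Finset.univ.erase i, (lam j - lam i)) * Complex.exp (lam i * t)

open Polynomial in
lemma acoef_eq_coeff {R : Type*} [CommRing R] {n : ℕ} (lam : Fin n → R) (k : ℕ) (hk : k ≤ n) :
    acoef lam (k : ℤ) = (∏ i : Fin n, (X - C (lam i))).coeff k := by
  have hcard : Multiset.card (Finset.univ.val.map lam) = n := by simp
  have h1 := Multiset.prod_X_sub_C_coeff (Finset.univ.val.map lam)
      (k := k) (by rw [hcard]; exact hk)
  rw [Multiset.map_map] at h1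
  have h2 : (Finset.univ.val.map lam).esymm (n - k)
      = ∑ I ∈ Finset.univ.powersetCard (n - k), ∏ i ∈ I, lam i := by
    rw [Finset.esymm_map_val]
  rw [hcard, h2] at h1
  rw [acoef, if_pos ⟨Int.natCast_nonneg k, by exact_mod_cast hk⟩, Int.toNat_natCast]
  rw [Finset.prod_eq_multiset_prod]
  exact h1.symm

lemma removeEntry_succ {α : Type*} {m : ℕ} (lam : Fin (m+1) → α) (i : Fin (m+1)) (j : Fin m) :
    removeEntry lam i j = lam (i.succAbove j) := by
  rfl

open Polynomial in
lemma prod_remove {R : Type*} [CommRing R] {m : ℕ} (lam : Fin (m+1) → R) (i : Fin (m+1)) :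
    (∏ j : Fin (m+1), (X - C (lam j)))
      = (X - C (lam i)) * ∏ j : Fin m, (X - C (removeEntry lam i j)) := by
  rw [Fin.prod_univ_succAbove (fun j => X - C (lam j)) i]
  simp [removeEntry_succ]

open Polynomial in
lemma key {R : Type*} [CommRing R] {m : ℕ} (lam : Fin (m+1) → R) (i : Fin (m+1)) (k : ℕ)
    (hk : k ≤ m) :
    lam i * acoef (removeEntry lam i) (k : ℤ) =
      acoef (removeEntry lam i) ((k : ℤ) - 1) - acoef lam (k : ℤ) := by
  have hA : acoef lam (k : ℤ) = (∏ j : Fin (m+1), (X - C (lam j))).coeff k :=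
    acoef_eq_coeff lam k (le_trans hk (Nat.le_succ m))
  have hB : acoef (removeEntry lam i) (k : ℤ)
      = (∏ j : Fin m, (X - C (removeEntry lam i j))).coeff k :=
    acoef_eq_coeff (removeEntry lam i) k hk
  rw [hA, hB, prod_remove, mul_comm (X - C (lam i))]
  cases k with
  | zero =>
    have : acoef (removeEntry lam i) ((0 : ℤ) - 1) = 0 := by
      rw [acoef, if_neg]; omega
    rw [Nat.cast_zero, this]
    simp [mul_coeff_zero, mul_comm]
  | succ j =>
    have h0 : acoef (removeEntry lam i) ((j : ℕ) : ℤ)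
        = (∏ l : Fin m, (X - C (removeEntry lam i l))).coeff j :=
      acoef_eq_coeff (removeEntry lam i) j (by omega)
    have h1 : ((j+1 : ℕ) : ℤ) - 1 = ((j : ℕ) : ℤ) := by push_cast; ring
    rw [h1, h0, coeff_mul_X_sub_C]
    ring

lemma acoef_top {R : Type*} [CommRing R] {m : ℕ} (mu : Fin m → R) :
    acoef mu (m : ℤ) = 1 := by
  rw [acoef, if_pos ⟨Int.natCast_nonneg m, le_refl _⟩, Int.toNat_natCast, Nat.sub_self]
  simp

/-- Componentwise Vandermonde basis dynamics: v'_k = v_{k-1} - a_k v_{n-1}. -/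
theorem vandermonde_basis_dynamics (n : ℕ) (lam : Fin n → ℂ)
    (h : Function.Injective lam) (k : ℕ) (hk : k < n) (t : ℝ) :
    HasDerivAt (fun s : ℝ => vbasisC lam (k : ℤ) s)
      (vbasisC lam ((k : ℤ) - 1) t - acoef lam (k : ℤ) * vbasisC lam ((n : ℤ) - 1) t) t := by
  cases n with
  | zero => omega
  | succ m =>
    have Hexp : ∀ i : Fin (m+1), HasDerivAt (fun s : ℝ => Complex.exp (lam i * s))
        (Complex.exp (lam i * t) * lam i) t := by
      intro i
      have h1 : HasDerivAt (fun s : ℝ => (lam i) * (s : ℂ)) (lam i) t := by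
        simpa using (Complex.ofRealCLM.hasDerivAt (x := t)).const_mul (lam i)
      exact h1.cexp
    have Hsum : HasDerivAt (fun s : ℝ => ∑ i : Fin (m+1),
        acoef (removeEntry lam i) (k : ℤ) /
          (∏ j ∈ Finset.univ.erase i, (lam j - lam i)) * Complex.exp (lam i * s))
        (∑ i : Fin (m+1), acoef (removeEntry lam i) (k : ℤ) /
          (∏ j ∈ Finset.univ.erase i, (lam j - lam i)) *
            (Complex.exp (lam i * t) * lam i)) t :=
      HasDerivAt.fun_sum (fun i _ => (Hexp i).const_mul _)
    have final := Hsum.const_mul ((-1 : ℂ) ^ (m + 1 - 1))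
    have hcast : ((m + 1 : ℕ) : ℤ) - 1 = ((m : ℕ) : ℤ) := by push_cast; ring
    have Hval : ((-1 : ℂ) ^ (m + 1 - 1) * ∑ i : Fin (m+1),
          acoef (removeEntry lam i) (k : ℤ) /
            (∏ j ∈ Finset.univ.erase i, (lam j - lam i)) *
              (Complex.exp (lam i * t) * lam i))
        = vbasisC lam ((k : ℤ) - 1) t -
            acoef lam (k : ℤ) * vbasisC lam (((m + 1 : ℕ) : ℤ) - 1) t := by
      simp only [vbasisC, hcast]
      rw [mul_left_comm (acoef lam (k : ℤ)), ← mul_sub]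
      congr 1
      rw [Finset.mul_sum, ← Finset.sum_sub_distrib]
      apply Finset.sum_congr rfl
      intro i _
      have h1 : acoef (removeEntry lam i) ((m : ℕ) : ℤ) = 1 := acoef_top _
      have hkey := key lam i k (by omega)
      rw [h1]
      linear_combination
        (Complex.exp (lam i * t) / (∏ j ∈ Finset.univ.erase i, (lam j - lam i))) * hkey
    rw [← Hval]
    exact final
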